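/- Fixed points of Whitfield's iteration are stationary points of the true rational least-squares error: with notation as above, the Wirtinger derivative of the converged Whitfield error E_WF at w equals the Wirtinger derivative of the nonlinear least-squares error E(w) = ∑_{i=1}^{M} |r(z_i; w) − H(z_i)|² at w, i.e., both equal ∑_{i=1}^{M} (1/d(z_i;w)) (p(z_i) − r(z_i;w) q(z_i)) · conj(r(z_i;w) − H(z_i)), provided d(z_i; w) ≠ 0 for all i. -/

import Mathlib

open scoped ComplexConjugate

/-- The (unconjugated) dot product on `ℂ^k`. -/
noncomputable def dotc {k : ℕ} (w v : Fin k → ℂ) : ℂ := ∑ j, w j * v j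

/-- Wirtinger derivative `df/dw_j = (1/2)(∂f/∂x_j − i ∂f/∂y_j)` of a
real-valued function of `w ∈ ℂ^k`. -/
noncomputable def wirt {k : ℕ} (f : (Fin k → ℂ) → ℝ) (w : Fin k → ℂ)
    (j : Fin k) : ℂ :=
  (1 / 2 : ℂ) * (((fderiv ℝ f w (Pi.single j 1) : ℝ) : ℂ)
    - Complex.I * ((fderiv ℝ f w (Pi.single j Complex.I) : ℝ) : ℂ))

noncomputable def dotL {k : ℕ} (a : Fin k → ℂ) : (Fin k → ℂ) →L[ℂ] ℂ :=
  ∑ j, a j • ContinuousLinearMap.proj j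

lemma dotc_eq_dotL {k : ℕ} (a v : Fin k → ℂ) : dotc v a = dotL a v := by
  simp [dotc, dotL, ContinuousLinearMap.sum_apply, mul_comm]

lemma hasFDerivAt_dotc {k : ℕ} (a w : Fin k → ℂ) :
    HasFDerivAt (fun v => dotc v a) (dotL a) w := by
  have : (fun v : Fin k → ℂ => dotc v a) = dotL a := funext fun v => dotc_eq_dotL a v
  rw [this]; exact (dotL a).hasFDerivAt

lemma dotL_single {k : ℕ} (a : Fin k → ℂ) (j : Fin k) (c : ℂ) :
    dotL a (Pi.single j c) = a j * c := by
  simp [dotL, ContinuousLinearMap.sum_apply, Pi.single_apply]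

lemma wirt_sum_sq {k M : ℕ} (g : Fin M → (Fin k → ℂ) → ℂ)
    (g' : Fin M → ((Fin k → ℂ) →L[ℂ] ℂ)) (w : Fin k → ℂ)
    (hg : ∀ i, HasFDerivAt (g i) (g' i) w) (j : Fin k) :
    wirt (fun v => ∑ i, ‖g i v‖ ^ 2) w j
      = ∑ i, conj (g i w) * g' i (Pi.single j 1) := by
  have hD : HasFDerivAt (fun v => ∑ i, ‖g i v‖ ^ 2)
      (∑ i, (2 : ℕ) • (innerSL ℝ (g i w)).comp ((g' i).restrictScalars ℝ)) w := by
    apply HasFDerivAt.fun_sum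
    intro i _
    exact ((hg i).restrictScalars ℝ).norm_sq
  rw [wirt, hD.fderiv]
  have hsingle : ∀ c : ℂ, (Pi.single j c : Fin k → ℂ) = c • (Pi.single j 1 : Fin k → ℂ) := by
    intro c; funext m; by_cases h : m = j <;> simp [Pi.single_apply, h]
  simp only [ContinuousLinearMap.sum_apply, ContinuousLinearMap.smul_apply,
    ContinuousLinearMap.coe_smul', Pi.smul_apply, ContinuousLinearMap.comp_apply,
    ContinuousLinearMap.coe_restrictScalars']
  push_cast
  rw [Finset.mul_sum, ← Finset.sum_sub_distrib, Finset.mul_sum]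
  apply Finset.sum_congr rfl
  intro i _
  rw [hsingle Complex.I, map_smul]
  set a := g' i (Pi.single j 1)
  set c := g i w
  simp only [Complex.inner, innerSL_apply_apply, smul_eq_mul]
  have h1 : Complex.I * a * conj c = Complex.I * (conj c * a) := by ring
  rw [h1, mul_comm a (conj c)]
  have h2 : (Complex.I * (conj c * a)).re = -((conj c * a).im) := by
    simp [Complex.mul_re]
  rw [h2]
  have : conj c * a = Complex.ofReal ((conj c * a).re) + Complex.ofReal ((conj c * a).im) * Complex.I := by
    simpa using (Complex.re_add_im (conj c * a)).symm
  rw [this]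
  simp only [Complex.add_re, Complex.add_im, Complex.ofReal_re, Complex.ofReal_im,
    Complex.mul_re, Complex.mul_im, Complex.I_re, Complex.I_im]
  push_cast
  ring


/-- fixed points of Whitfield's iteration are stationary points of
the true rational least-squares error: the Wirtinger derivatives of the
converged Whitfield error and of `E(w) = ∑ i |r(z_i;w) − H(z_i)|²` agree and
both equal the claimed formula. -/
theorem wf_fixed_point_stationary {k M : ℕ} (z H : Fin M → ℂ)
    (p q : ℂ → Fin k → ℂ) (w : Fin k → ℂ)
    (hd : ∀ i, dotc w (q (z i)) ≠ 0) (j : Fin k) :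
    wirt (fun v => ∑ i, (1 / ‖dotc w (q (z i))‖ ^ 2)
        * ‖dotc v (p (z i))
            - (dotc w (p (z i)) / dotc w (q (z i))) * dotc v (q (z i))
            + dotc w (p (z i)) - dotc w (q (z i)) * H i‖ ^ 2) w j
      = wirt (fun v => ∑ i, ‖dotc v (p (z i)) / dotc v (q (z i)) - H i‖ ^ 2) w j
    ∧ wirt (fun v => ∑ i, ‖dotc v (p (z i)) / dotc v (q (z i)) - H i‖ ^ 2) w j
      = ∑ i, (1 / dotc w (q (z i)))
          * (p (z i) j - (dotc w (p (z i)) / dotc w (q (z i))) * q (z i) j)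
          * conj (dotc w (p (z i)) / dotc w (q (z i)) - H i) := by
  -- derivative of the inverse of the denominator
  have hinv : ∀ i : Fin M, HasFDerivAt (fun v : Fin k → ℂ => (dotc v (q (z i)))⁻¹)
      ((ContinuousLinearMap.smulRight (1 : ℂ →L[ℂ] ℂ) (-(dotc w (q (z i)) ^ 2)⁻¹)).comp
        (dotL (q (z i)))) w := fun i =>
    (hasFDerivAt_inv (hd i)).comp w (hasFDerivAt_dotc (q (z i)) w)
  -- derivative of each summand of E
  have hgE : ∀ i : Fin M, HasFDerivAt
      (fun v => dotc v (p (z i)) / dotc v (q (z i)) - H i)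
      ((dotc w (p (z i))) • ((ContinuousLinearMap.smulRight (1 : ℂ →L[ℂ] ℂ)
          (-(dotc w (q (z i)) ^ 2)⁻¹)).comp (dotL (q (z i))))
        + ((dotc w (q (z i)))⁻¹) • dotL (p (z i))) w := by
    intro i
    have h := (((hasFDerivAt_dotc (p (z i)) w).mul (hinv i)).sub_const (H i))
    simpa only [div_eq_mul_inv, Pi.mul_apply] using h
  have hE := wirt_sum_sq (fun i v => dotc v (p (z i)) / dotc v (q (z i)) - H i)
    (fun i => (dotc w (p (z i))) • ((ContinuousLinearMap.smulRight (1 : ℂ →L[ℂ] ℂ)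
          (-(dotc w (q (z i)) ^ 2)⁻¹)).comp (dotL (q (z i))))
        + ((dotc w (q (z i)))⁻¹) • dotL (p (z i))) w hgE j
  have hEformula :
      wirt (fun v => ∑ i, ‖dotc v (p (z i)) / dotc v (q (z i)) - H i‖ ^ 2) w j
      = ∑ i, (1 / dotc w (q (z i)))
          * (p (z i) j - (dotc w (p (z i)) / dotc w (q (z i))) * q (z i) j)
          * conj (dotc w (p (z i)) / dotc w (q (z i)) - H i) := by
    rw [hE]
    apply Finset.sum_congr rfl
    intro i _
    simp only [ContinuousLinearMap.add_apply, ContinuousLinearMap.smul_apply,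
      ContinuousLinearMap.comp_apply, ContinuousLinearMap.smulRight_apply,
      ContinuousLinearMap.one_apply, dotL_single, smul_eq_mul]
    generalize conj (dotc w (p (z i)) / dotc w (q (z i)) - H i) = c
    field_simp
    linear_combination (c * p (z i) j * (dotc w (q (z i)))⁻¹) * (mul_inv_cancel₀ (hd i))
  -- rewrite the Whitfield error
  have hfun : (fun v => ∑ i, (1 / ‖dotc w (q (z i))‖ ^ 2)
        * ‖dotc v (p (z i))
            - (dotc w (p (z i)) / dotc w (q (z i))) * dotc v (q (z i))
            + dotc w (p (z i)) - dotc w (q (z i)) * H i‖ ^ 2)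
      = (fun v => ∑ i, ‖(1 / dotc w (q (z i)))
          * (dotc v (p (z i))
            - (dotc w (p (z i)) / dotc w (q (z i))) * dotc v (q (z i))
            + dotc w (p (z i)) - dotc w (q (z i)) * H i)‖ ^ 2) := by
    funext v
    apply Finset.sum_congr rfl
    intro i _
    rw [norm_mul, mul_pow, norm_div, norm_one]
    ring
  have hgW : ∀ i : Fin M, HasFDerivAt
      (fun v => (1 / dotc w (q (z i)))
          * (dotc v (p (z i))
            - (dotc w (p (z i)) / dotc w (q (z i))) * dotc v (q (z i))
            + dotc w (p (z i)) - dotc w (q (z i)) * H i))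
      ((1 / dotc w (q (z i))) • (dotL (p (z i))
        - (dotc w (p (z i)) / dotc w (q (z i))) • dotL (q (z i)))) w := by
    intro i
    exact ((((hasFDerivAt_dotc (p (z i)) w).sub
        ((hasFDerivAt_dotc (q (z i)) w).const_mul
          (dotc w (p (z i)) / dotc w (q (z i))))).add_const
        (dotc w (p (z i)))).sub_const (dotc w (q (z i)) * H i)).const_mul
        (1 / dotc w (q (z i)))
  have hW := wirt_sum_sq
    (fun i v => (1 / dotc w (q (z i)))
          * (dotc v (p (z i))
            - (dotc w (p (z i)) / dotc w (q (z i))) * dotc v (q (z i))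
            + dotc w (p (z i)) - dotc w (q (z i)) * H i))
    (fun i => (1 / dotc w (q (z i))) • (dotL (p (z i))
        - (dotc w (p (z i)) / dotc w (q (z i))) • dotL (q (z i)))) w hgW j
  have hWformula :
      wirt (fun v => ∑ i, (1 / ‖dotc w (q (z i))‖ ^ 2)
        * ‖dotc v (p (z i))
            - (dotc w (p (z i)) / dotc w (q (z i))) * dotc v (q (z i))
            + dotc w (p (z i)) - dotc w (q (z i)) * H i‖ ^ 2) w j
      = ∑ i, (1 / dotc w (q (z i)))
          * (p (z i) j - (dotc w (p (z i)) / dotc w (q (z i))) * q (z i) j)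
          * conj (dotc w (p (z i)) / dotc w (q (z i)) - H i) := by
    rw [hfun, hW]
    apply Finset.sum_congr rfl
    intro i _
    have hgw : (1 / dotc w (q (z i)))
          * (dotc w (p (z i))
            - (dotc w (p (z i)) / dotc w (q (z i))) * dotc w (q (z i))
            + dotc w (p (z i)) - dotc w (q (z i)) * H i)
        = dotc w (p (z i)) / dotc w (q (z i)) - H i := by
      field_simp [hd i]
      ring
    rw [hgw]
    simp only [ContinuousLinearMap.smul_apply, ContinuousLinearMap.sub_apply,
      dotL_single, smul_eq_mul]
    generalize conj (dotc w (p (z i)) / dotc w (q (z i)) - H i) = c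
    field_simp
  exact ⟨hWformula.trans hEformula.symm, hEformula⟩
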